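/- arXiv:1308.3451 — 5 statements merged into one kernel-verified Lean document; each statement's English description precedes it below -/
import Mathlib

section
/- If every A-congruence on the term algebra T is finitely generated, then every A-algebra B is A-equationally noetherian in n variables. -/
open FirstOrder FirstOrder.Language

universe u v w x

/-- An algebraic language: a first-order language with no relation symbols. -/
def IsAlgebraicLanguage (L : FirstOrder.Language.{u, w}) : Prop :=
  ∀ m : ℕ, IsEmpty (L.Relations m)

/-- Interpretation in `B` of the constant symbol attached to `a : A`. -/
def constMap (L : FirstOrder.Language.{u, w}) (A : Type v) (B : Type x)
    [L[[A]].Structure B] (a : A) : B :=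
  Structure.funMap (L.con a) (fun i : Fin 0 => i.elim0)

/-- `B` is an `A`-algebra: the interpretation-of-constants map `A → B` is injective and
commutes with all `L`-function symbols (i.e. it is an `L`-embedding of `A` into `B`). -/
def IsAAlgebra (L : FirstOrder.Language.{u, w}) (A : Type v) [L.Structure A]
    (B : Type x) [L[[A]].Structure B] : Prop :=
  Function.Injective (constMap L A B) ∧
    ∀ (m : ℕ) (f : L.Functions m) (a : Fin m → A),
      constMap L A B (Structure.funMap f a) =
        Structure.funMap ((L.lhomWithConstants A).onFunction f)
          (fun i => constMap L A B (a i))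

/-- The algebraic set `V_B(S)` of a system of equations `S`. -/
def eqnSet (L : FirstOrder.Language.{u, w}) (A : Type v) (B : Type x)
    [L[[A]].Structure B] {n : ℕ}
    (S : Set (L[[A]].Term (Fin n) × L[[A]].Term (Fin n))) : Set (Fin n → B) :=
  { b | ∀ pq ∈ S, Term.realize b pq.1 = Term.realize b pq.2 }

/-- `B` is `A`-equationally noetherian in `n` variables. -/
def EqNoetherian (L : FirstOrder.Language.{u, w}) (A : Type v) (B : Type x)
    [L[[A]].Structure B] (n : ℕ) : Prop :=
  ∀ S : Set (L[[A]].Term (Fin n) × L[[A]].Term (Fin n)),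
    ∃ S₀ ⊆ S, S₀.Finite ∧ eqnSet L A B S = eqnSet L A B S₀

/-- A congruence on the term algebra `T_{L(A)}(x₁, …, xₙ)`. -/
def IsCongruence (L : FirstOrder.Language.{u, w}) (A : Type v) {n : ℕ}
    (R : L[[A]].Term (Fin n) → L[[A]].Term (Fin n) → Prop) : Prop :=
  Equivalence R ∧
    ∀ (m : ℕ) (f : L[[A]].Functions m) (p q : Fin m → L[[A]].Term (Fin n)),
      (∀ i, R (p i) (q i)) → R (Term.func f p) (Term.func f q)

/-- An `A`-congruence: a congruence relating no two constant terms coming from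
distinct elements of `A`. -/
def IsACongruence (L : FirstOrder.Language.{u, w}) (A : Type v) {n : ℕ}
    (R : L[[A]].Term (Fin n) → L[[A]].Term (Fin n) → Prop) : Prop :=
  IsCongruence L A R ∧
    ∀ a₁ a₂ : A, R ((L.con a₁).term) ((L.con a₂).term) → a₁ = a₂

/-- The congruence generated by a set `S` of pairs of terms. -/
def congGen (L : FirstOrder.Language.{u, w}) (A : Type v) {n : ℕ}
    (S : Set (L[[A]].Term (Fin n) × L[[A]].Term (Fin n))) :
    L[[A]].Term (Fin n) → L[[A]].Term (Fin n) → Prop :=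
  fun p q => ∀ R : L[[A]].Term (Fin n) → L[[A]].Term (Fin n) → Prop,
    IsCongruence L A R → (∀ x ∈ S, R x.1 x.2) → R p q

/-- `A` contains a trivial (one-element) subalgebra. -/
def HasTrivialSubalgebra (L : FirstOrder.Language.{u, w}) (A : Type v)
    [L.Structure A] : Prop :=
  ∃ e : A, ∀ (m : ℕ) (f : L.Functions m), Structure.funMap f (fun _ : Fin m => e) = e

/-- If every `A`-congruence on the term algebra is finitely generated,
then every `A`-algebra `B` is `A`-equationally noetherian in `n` variables. -/
theorem eq_noetherian_of_fg_congruences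
    {L : FirstOrder.Language.{u, w}} {A : Type v} [L.Structure A]
    (hL : IsAlgebraicLanguage L) (n : ℕ)
    (hfg : ∀ R : L[[A]].Term (Fin n) → L[[A]].Term (Fin n) → Prop,
      IsACongruence L A R →
        ∃ S : Set (L[[A]].Term (Fin n) × L[[A]].Term (Fin n)),
          S.Finite ∧ R = congGen L A S)
    (B : Type x) [L[[A]].Structure B] (hB : IsAAlgebra L A B) :
    EqNoetherian L A B n := by
  intro S
  by_contra h
  -- For every finite subset T of S, there is an equation of S failing somewhere on V(T)
  have key : ∀ T : Set (L[[A]].Term (Fin n) × L[[A]].Term (Fin n)), T ⊆ S → T.Finite →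
      ∃ s ∈ S, ∃ b : Fin n → B, b ∈ eqnSet L A B T ∧
        Term.realize b s.1 ≠ Term.realize b s.2 := by
    intro T hTS hTfin
    by_contra hc
    push_neg at hc
    apply h
    refine ⟨T, hTS, hTfin, ?_⟩
    ext b
    constructor
    · intro hb pq hpq; exact hb pq (hTS hpq)
    · intro hb pq hpq
      by_contra hne
      exact hne (hc pq hpq b hb)
  classical
  -- iterate: Q is the type of finite subsets of S
  set Q := {T : Set (L[[A]].Term (Fin n) × L[[A]].Term (Fin n)) // T ⊆ S ∧ T.Finite} with hQ
  have keyQ : ∀ T : Q, ∃ s ∈ S, ∃ b : Fin n → B, b ∈ eqnSet L A B T.1 ∧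
      Term.realize b s.1 ≠ Term.realize b s.2 := fun T => key T.1 T.2.1 T.2.2
  choose sel hselS bsel hbsel hneq using keyQ
  set g : Q → Q := fun T => ⟨insert (sel T) T.1,
    Set.insert_subset (hselS T) T.2.1, T.2.2.insert _⟩ with hg
  set F : ℕ → Q := fun k => g^[k] ⟨∅, Set.empty_subset S, Set.finite_empty⟩ with hF
  have hFsucc : ∀ k, F (k + 1) = g (F k) := fun k => Function.iterate_succ_apply' g k _
  have hFmono : ∀ k l, k ≤ l → (F k).1 ⊆ (F l).1 := by
    have : Monotone fun k => (F k).1 := monotone_nat_of_le_succ (by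
      intro k
      rw [hFsucc k]
      exact Set.subset_insert _ _)
    exact fun k l hkl => this hkl
  -- the radical congruences
  set R : ℕ → (L[[A]].Term (Fin n) → L[[A]].Term (Fin n) → Prop) :=
    fun k p q => ∀ b ∈ eqnSet L A B (F k).1, Term.realize b p = Term.realize b q with hR
  have hRmono : ∀ k l, k ≤ l → ∀ p q, R k p q → R l p q := by
    intro k l hkl p q hpq b hb
    refine hpq b ?_
    intro pq hpq'
    exact hb pq (hFmono k l hkl hpq')
  set Ri : L[[A]].Term (Fin n) → L[[A]].Term (Fin n) → Prop :=
    fun p q => ∃ k, R k p q with hRi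
  have realize_con : ∀ (a : A) (b : Fin n → B),
      Term.realize b ((L.con a).term : L[[A]].Term (Fin n)) = constMap L A B a := by
    intro a b
    show Structure.funMap (L.con a) _ = Structure.funMap (L.con a) _
    congr
    funext i
    exact i.elim0
  have hcong : IsACongruence L A Ri := by
    refine ⟨⟨⟨fun p => ⟨0, fun b _ => rfl⟩,
      fun {p q} hpq => ?_, fun {p q r} hpq hqr => ?_⟩, ?_⟩, ?_⟩
    · obtain ⟨k, hk⟩ := hpq
      exact ⟨k, fun b hb => (hk b hb).symm⟩
    · obtain ⟨k1, hk1⟩ := hpq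
      obtain ⟨k2, hk2⟩ := hqr
      refine ⟨max k1 k2, fun b hb => ?_⟩
      rw [hRmono k1 (max k1 k2) (le_max_left _ _) _ _ hk1 b hb,
        hRmono k2 (max k1 k2) (le_max_right _ _) _ _ hk2 b hb]
    · intro m f p q hpq
      choose k hk using hpq
      refine ⟨Finset.univ.sup k, fun b hb => ?_⟩
      rw [Term.realize_func, Term.realize_func]
      congr 1
      funext i
      exact hRmono (k i) _ (Finset.le_sup (Finset.mem_univ i)) _ _ (hk i) b hb
    · intro a₁ a₂ ha
      obtain ⟨k, hk⟩ := ha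
      have := hk (bsel (F k)) (hbsel (F k))
      rw [realize_con, realize_con] at this
      exact hB.1 this
  obtain ⟨T, hTfin, hTeq⟩ := hfg Ri hcong
  -- every element of T lies in some R k
  have hTRi : ∀ t ∈ T, Ri t.1 t.2 := by
    intro t ht
    rw [hTeq]
    intro R' _ hR'
    exact hR' t ht
  obtain ⟨K, hK⟩ : ∃ K, ∀ t ∈ T, R K t.1 t.2 := by
    choose k hk using hTRi
    obtain ⟨K, hKb⟩ := (hTfin.dependent_image (fun t ht => k t ht)).bddAbove
    refine ⟨K, fun t ht => hRmono (k t ht) K (hKb ⟨t, ht, rfl⟩) _ _ (hk t ht)⟩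
  -- R K is a congruence containing T, hence Ri ⊆ R K
  have hRKcong : IsCongruence L A (R K) := by
    refine ⟨⟨fun p b _ => rfl, fun {p q} hpq b hb => (hpq b hb).symm,
      fun {p q r} hpq hqr b hb => (hpq b hb).trans (hqr b hb)⟩, ?_⟩
    intro m f p q hpq b hb
    rw [Term.realize_func, Term.realize_func]
    congr 1
    funext i
    exact hpq i b hb
  have hRiRK : ∀ p q, Ri p q → R K p q := by
    intro p q hpq
    rw [hTeq] at hpq
    exact hpq (R K) hRKcong hK
  -- derive the contradiction at stage K
  have hsel : Ri (sel (F K)).1 (sel (F K)).2 := by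
    refine ⟨K + 1, fun b hb => ?_⟩
    refine hb (sel (F K)) ?_
    rw [hFsucc K]
    exact Set.mem_insert _ _
  exact hneq (F K) (hRiRK _ _ hsel (bsel (F K)) (hbsel (F K)))
end

section
/- Suppose every A-separating normal subgroup N of G = A ∗ F_n (that is, every normal subgroup with N ∩ A = 1) is the normal closure of a finite subset of G. Then for every group B, every injective group homomorphism j : A → B, and every subset W ⊆ G, there exists a finite subset W₀ ⊆ W such that V_B(W) = V_B(W₀). -/
open Monoid

universe u v

/-- Compactness: any element of the normal closure of `W` lies in the normal closure
of a finite subset of `W`. -/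
theorem mem_normalClosure_finite_subset {G : Type*} [Group G] {W : Set G} {g : G}
    (hg : g ∈ Subgroup.normalClosure W) :
    ∃ T ⊆ W, T.Finite ∧ g ∈ Subgroup.normalClosure T := by
  refine Subgroup.closure_induction ?_ ?_ ?_ ?_ hg
  · intro x hx
    obtain ⟨a, ha, hconj⟩ := Group.mem_conjugatesOfSet_iff.1 hx
    exact ⟨{a}, Set.singleton_subset_iff.2 ha, Set.finite_singleton a,
      Subgroup.conjugatesOfSet_subset_normalClosure
        (Group.mem_conjugatesOfSet_iff.2 ⟨a, rfl, hconj⟩)⟩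
  · exact ⟨∅, Set.empty_subset _, Set.finite_empty, Subgroup.one_mem _⟩
  · rintro x y hx hy ⟨T₁, hT₁W, hT₁fin, hxT₁⟩ ⟨T₂, hT₂W, hT₂fin, hyT₂⟩
    exact ⟨T₁ ∪ T₂, Set.union_subset hT₁W hT₂W, hT₁fin.union hT₂fin,
      Subgroup.mul_mem _
        (Subgroup.normalClosure_mono Set.subset_union_left hxT₁)
        (Subgroup.normalClosure_mono Set.subset_union_right hyT₂)⟩
  · rintro x hx ⟨T, hTW, hTfin, hxT⟩
    exact ⟨T, hTW, hTfin, Subgroup.inv_mem _ hxT⟩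

/-- If every `A`-separating normal subgroup of `G = A ∗ Fₙ` is the
normal closure of a finite subset, then for every group `B`, every injective
homomorphism `j : A → B` and every system `W ⊆ G` of equations, there is a finite
subsystem `W₀ ⊆ W` with `V_B(W) = V_B(W₀)`. -/
theorem eq_noetherian_of_fg_separating_normal_subgroups
    {A : Type u} [Group A] (n : ℕ)
    (h : ∀ N : Subgroup (Coprod A (FreeGroup (Fin n))), N.Normal →
      (∀ a : A, Coprod.inl a ∈ N → a = 1) →
      ∃ s : Set (Coprod A (FreeGroup (Fin n))),
        s.Finite ∧ N = Subgroup.normalClosure s) :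
    ∀ (B : Type v) [Group B] (j : A →* B), Function.Injective j →
      ∀ W : Set (Coprod A (FreeGroup (Fin n))),
        ∃ W₀ ⊆ W, W₀.Finite ∧
          { b : Fin n → B | ∀ w ∈ W, Coprod.lift j (FreeGroup.lift b) w = 1 } =
          { b : Fin n → B | ∀ w ∈ W₀, Coprod.lift j (FreeGroup.lift b) w = 1 } := by
  intro B _ j hj W
  classical
  -- the solution set of a system equals the solution set of its normal closure
  have key : ∀ (V : Set (Coprod A (FreeGroup (Fin n)))) (b : Fin n → B),
      (∀ w ∈ V, Coprod.lift j (FreeGroup.lift b) w = 1) ↔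
      Subgroup.normalClosure V ≤ (Coprod.lift j (FreeGroup.lift b)).ker := by
    intro V b
    constructor
    · intro hb
      exact Subgroup.normalClosure_le_normal fun w hw => hb w hw
    · intro hb w hw
      exact hb (Subgroup.subset_normalClosure hw)
  by_cases hA : ∀ a : A, Coprod.inl a ∈ Subgroup.normalClosure W → a = 1
  · obtain ⟨s, hsfin, hseq⟩ := h _ (Subgroup.normalClosure_normal) hA
    -- find a finite subset of W whose normal closure contains s
    have : ∃ T ⊆ W, T.Finite ∧ s ⊆ ↑(Subgroup.normalClosure T) := by
      have hs : ∀ g : Coprod A (FreeGroup (Fin n)),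
          ∃ T, T ⊆ W ∧ T.Finite ∧ (g ∈ s → g ∈ Subgroup.normalClosure T) := by
        intro g
        by_cases hg : g ∈ s
        · have hgW : g ∈ Subgroup.normalClosure W := by
            rw [hseq]; exact Subgroup.subset_normalClosure hg
          obtain ⟨T, h1, h2, h3⟩ := mem_normalClosure_finite_subset hgW
          exact ⟨T, h1, h2, fun _ => h3⟩
        · exact ⟨∅, Set.empty_subset _, Set.finite_empty, fun hg' => absurd hg' hg⟩
      choose T hTW hTfin hTmem using hs
      refine ⟨⋃ g ∈ s, T g, ?_, ?_, ?_⟩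
      · exact Set.iUnion₂_subset fun g _ => hTW g
      · exact Set.Finite.biUnion hsfin fun g _ => hTfin g
      · intro g hg
        exact Subgroup.normalClosure_mono (Set.subset_iUnion₂ g hg) (hTmem g hg)
    obtain ⟨T, hTW, hTfin, hsT⟩ := this
    have hclos : Subgroup.normalClosure T = Subgroup.normalClosure W := by
      refine le_antisymm (Subgroup.normalClosure_mono hTW) ?_
      rw [hseq]
      exact Subgroup.normalClosure_le_normal hsT
    refine ⟨T, hTW, hTfin, ?_⟩
    ext b
    simp only [Set.mem_setOf_eq, key, hclos]
  · push_neg at hA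
    obtain ⟨a, haW, hane⟩ := hA
    obtain ⟨T, hTW, hTfin, haT⟩ := mem_normalClosure_finite_subset haW
    refine ⟨T, hTW, hTfin, ?_⟩
    ext b
    simp only [Set.mem_setOf_eq]
    constructor
    · intro hb w hw
      exact hb w (hTW hw)
    · intro hb
      exfalso
      apply hane
      apply hj
      have : Coprod.lift j (FreeGroup.lift b) (Coprod.inl a) = 1 :=
        (key T b).1 hb haT
      simpa using this
end

section
/- Suppose that for every group B, every injective group homomorphism j : A → B, and every subset W ⊆ G = A ∗ F_n, there exists a finite subset W₀ ⊆ W with V_B(W) = V_B(W₀). Then there is no strictly increasing sequence N₀ ⊊ N₁ ⊊ N₂ ⊊ ⋯ of A-separating normal subgroups of G. -/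
open Monoid

universe u

/-- If for every group `B`, every injective homomorphism `j : A → B`
and every system `W ⊆ G = A ∗ Fₙ` of equations there is a finite subsystem `W₀ ⊆ W`
with `V_B(W) = V_B(W₀)`, then there is no strictly increasing sequence of
`A`-separating normal subgroups of `G`. -/
theorem no_strict_chain_of_separating_normal_subgroups
    {A : Type u} [Group A] (n : ℕ)
    (h : ∀ (B : Type u) [Group B] (j : A →* B), Function.Injective j →
      ∀ W : Set (Coprod A (FreeGroup (Fin n))),
        ∃ W₀ ⊆ W, W₀.Finite ∧
          { b : Fin n → B | ∀ w ∈ W, Coprod.lift j (FreeGroup.lift b) w = 1 } =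
          { b : Fin n → B | ∀ w ∈ W₀, Coprod.lift j (FreeGroup.lift b) w = 1 }) :
    ¬ ∃ N : ℕ → Subgroup (Coprod A (FreeGroup (Fin n))),
        (∀ i, (N i).Normal) ∧
        (∀ i, ∀ a : A, Coprod.inl a ∈ N i → a = 1) ∧
        (∀ i, N i < N (i + 1)) := by
  rintro ⟨N, hnorm, hsep, hlt⟩
  set G := Coprod A (FreeGroup (Fin n)) with hG
  haveI : ∀ i, (N i).Normal := hnorm
  -- the chain is monotone
  have hmono : Monotone N := monotone_nat_of_le_succ (fun i => (hlt i).le)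
  -- the quotient maps
  set Q : ℕ → Type u := fun i => G ⧸ N i with hQ
  set q : ∀ i, G →* Q i := fun i => QuotientGroup.mk' (N i) with hq
  set φ : ∀ i : ℕ, A →* Q i := fun i => (q i).comp Coprod.inl with hφ
  have hφinj : ∀ i, Function.Injective (φ i) := by
    intro i
    rw [injective_iff_map_eq_one]
    intro a ha
    exact hsep i a ((QuotientGroup.eq_one_iff _).1 ha)
  -- the amalgamated free product of the quotients over `A`
  set B := PushoutI φ with hB
  set j : A →* B := PushoutI.base φ with hj
  have hjinj : Function.Injective j := PushoutI.base_injective hφinj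
  set W : Set G := ⋃ i, (N i : Set G) with hW
  obtain ⟨W₀, hW₀W, hW₀fin, hVeq⟩ := h B j hjinj W
  -- find `k` with `W₀ ⊆ N k`
  have hdir : ∃ k, W₀ ⊆ (N k : Set G) := by
    have hidx : ∀ w : W₀, ∃ k, (w : G) ∈ N k := fun w => Set.mem_iUnion.1 (hW₀W w.2)
    choose f hf using hidx
    haveI := hW₀fin.fintype
    refine ⟨Finset.univ.sup f, fun w hw => ?_⟩
    exact hmono (Finset.le_sup (Finset.mem_univ (⟨w, hw⟩ : W₀))) (hf ⟨w, hw⟩)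
  obtain ⟨k, hk⟩ := hdir
  -- the homomorphism `G → G/N k → B`
  set ψ : G →* B := (PushoutI.of (φ := φ) k).comp (q k) with hψ
  set b : Fin n → B := fun i => ψ (Coprod.inr (FreeGroup.of i)) with hb
  have hlift : Coprod.lift j (FreeGroup.lift b) = ψ := by
    apply Coprod.hom_ext
    · rw [Coprod.lift_comp_inl, hψ, MonoidHom.comp_assoc]
      exact (PushoutI.of_comp_eq_base k).symm
    · rw [Coprod.lift_comp_inr]
      exact FreeGroup.ext_hom _ _ (fun i => by rw [FreeGroup.lift_apply_of]; rfl)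
  -- `b` solves `W₀`
  have hbW₀ : b ∈ { b : Fin n → B | ∀ w ∈ W₀, Coprod.lift j (FreeGroup.lift b) w = 1 } := by
    intro w hw
    rw [hlift, hψ, MonoidHom.comp_apply]
    have : q k w = 1 := (QuotientGroup.eq_one_iff w).2 (hk hw)
    rw [this, map_one]
  -- hence `b` solves all of `W`
  have hbW : ∀ w ∈ W, Coprod.lift j (FreeGroup.lift b) w = 1 := by
    have := hVeq ▸ hbW₀
    exact this
  -- but `b` fails on an element of `N (k+1) \ N k`
  obtain ⟨w, hw1, hw2⟩ := SetLike.exists_of_lt (hlt k)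
  have hwW : w ∈ W := Set.mem_iUnion.2 ⟨k + 1, hw1⟩
  have := hbW w hwW
  rw [hlift, hψ, MonoidHom.comp_apply] at this
  have hq1 : q k w = 1 := by
    have h1 : PushoutI.of (φ := φ) k (q k w) = PushoutI.of (φ := φ) k 1 := by
      rw [map_one]; exact this
    exact PushoutI.of_injective hφinj k h1
  exact hw2 ((QuotientGroup.eq_one_iff w).1 hq1)
end

section
/- Let A be a noetherian commutative ring. Then every commutative ring B equipped with an injective ring homomorphism f : A → B is A-equationally noetherian: for every n : ℕ and every set S of pairs of polynomials in A[x₁, …, xₙ], there exists a finite subset S₀ ⊆ S such that V_B(S) = V_B(S₀). -/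
universe u v

lemma exists_finite_subset_span_eq {R : Type*} [CommRing R] [IsNoetherianRing R]
    (s : Set R) : ∃ t ⊆ s, t.Finite ∧ Ideal.span t = Ideal.span s := by
  classical
  obtain ⟨u, hu⟩ : (Ideal.span s).FG := IsNoetherian.noetherian _
  have hus : ∀ x : u, (x : R) ∈ Ideal.span s := fun x => hu ▸ Ideal.subset_span x.2
  choose T hT1 hT2 using fun x : u => Submodule.mem_span_finite_of_mem_span (hus x)
  refine ⟨⋃ x : u, (T x : Set R), Set.iUnion_subset fun x => hT1 x,
    Set.finite_iUnion fun x => (T x).finite_toSet, le_antisymm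
      (Ideal.span_mono (Set.iUnion_subset fun x => hT1 x)) ?_⟩
  rw [← hu]
  refine Ideal.span_le.2 fun y hy => ?_
  exact Ideal.span_mono (Set.subset_iUnion (fun x : u => (T x : Set R)) ⟨y, hy⟩)
    (hT2 ⟨y, hy⟩)

/-- If `A` is a noetherian commutative ring, then every commutative
ring `B` equipped with an injective ring homomorphism `f : A → B` is `A`-equationally
noetherian: every system of polynomial equations over `A` in `n` variables is
equivalent over `B` to a finite subsystem. -/
theorem commRing_eq_noetherian
    {A : Type u} [CommRing A] [IsNoetherianRing A] :
    ∀ (B : Type v) [CommRing B] (f : A →+* B), Function.Injective f →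
      ∀ (n : ℕ)
        (S : Set (MvPolynomial (Fin n) A × MvPolynomial (Fin n) A)),
        ∃ S₀ ⊆ S, S₀.Finite ∧
          { b : Fin n → B | ∀ pq ∈ S,
              MvPolynomial.eval₂ f b pq.1 = MvPolynomial.eval₂ f b pq.2 } =
          { b : Fin n → B | ∀ pq ∈ S₀,
              MvPolynomial.eval₂ f b pq.1 = MvPolynomial.eval₂ f b pq.2 } := by
  classical
  intro B _ f _ n S
  set g : MvPolynomial (Fin n) A × MvPolynomial (Fin n) A → MvPolynomial (Fin n) A :=
    fun pq => pq.1 - pq.2 with hg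
  obtain ⟨t, hts, htf, hspan⟩ := exists_finite_subset_span_eq (g '' S)
  have hchoice : ∀ d ∈ t, ∃ pq ∈ S, g pq = d := fun d hd => by
    obtain ⟨pq, hpq, rfl⟩ := hts hd; exact ⟨pq, hpq, rfl⟩
  choose φ hφ1 hφ2 using hchoice
  have : Finite t := htf.to_subtype
  refine ⟨Set.range (fun x : t => φ x x.2), Set.range_subset_iff.2 fun x => hφ1 x x.2,
    Set.finite_range _, ?_⟩
  ext b
  simp only [Set.mem_setOf_eq]
  constructor
  · rintro h pq ⟨x, rfl⟩
    exact h _ (hφ1 x x.2)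
  · intro h pq hpq
    set ψ : MvPolynomial (Fin n) A →+* B := MvPolynomial.eval₂Hom f b with hψ
    have hker : Ideal.span t ≤ RingHom.ker ψ := by
      refine Ideal.span_le.2 fun d hd => ?_
      have h0 : ψ (g (φ d hd)) = 0 := by
        have := h (φ d hd) ⟨⟨d, hd⟩, rfl⟩
        simp only [hg, map_sub]
        simpa [hψ, sub_eq_zero] using this
      rw [hφ2 d hd] at h0
      exact h0
    have hmem : g pq ∈ Ideal.span t := by
      rw [hspan]; exact Ideal.subset_span ⟨pq, hpq, rfl⟩
    have h0 : ψ (g pq) = 0 := hker hmem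
    simp only [hg, map_sub, sub_eq_zero] at h0
    simpa [hψ] using h0
end

section
/- Let A be a finitely generated abelian group, B an abelian group, and f : A → B an injective group homomorphism. Then B is A-equationally noetherian: for every n : ℕ and every set S of equations with coefficients in A in n variables, there exists a finite subset S₀ ⊆ S such that the set of common solutions of S₀ in B equals the set of common solutions of S in B. -/
set_option maxHeartbeats 800000


universe u v

/-- If `A` is a finitely generated abelian group, `B` an abelian group
and `f : A → B` an injective homomorphism, then `B` is `A`-equationally noetherian:
every system of equations with coefficients in `A` in `n` variables is equivalent
over `B` to a finite subsystem. -/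
theorem fg_abelian_eq_noetherian
    {A : Type u} [AddCommGroup A] (hA : AddGroup.FG A)
    {B : Type v} [AddCommGroup B] (f : A →+ B) (hf : Function.Injective f)
    (n : ℕ) (S : Set ((Fin n → ℤ) × A)) :
    ∃ S₀ ⊆ S, S₀.Finite ∧
      { b : Fin n → B | ∀ ca ∈ S₀, ∑ i, ca.1 i • b i = f ca.2 } =
      { b : Fin n → B | ∀ ca ∈ S, ∑ i, ca.1 i • b i = f ca.2 } := by
  classical
  have hAfin : Module.Finite ℤ A := Module.Finite.iff_addGroup_fg.2 hA
  have : IsNoetherian ℤ ((Fin n → ℤ) × A) := inferInstance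
  -- span of S is finitely generated, so generated by a finite subset of S
  have hfg : (Submodule.span ℤ S).FG := IsNoetherian.noetherian _
  obtain ⟨T, hTspan⟩ := hfg
  -- each element of T lies in the span of a finite subset of S
  have hmemT : ∀ t : {x // x ∈ T}, (t : (Fin n → ℤ) × A) ∈ Submodule.span ℤ S :=
    fun t => hTspan ▸ Submodule.subset_span t.2
  choose g hg1 hg2 using fun t : {x // x ∈ T} =>
    Submodule.mem_span_finite_of_mem_span (hmemT t)
  set F : Finset ((Fin n → ℤ) × A) := T.attach.biUnion g with hF
  set S₀ : Set ((Fin n → ℤ) × A) := ↑F with hS₀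
  have hS₀sub : S₀ ⊆ S := by
    intro x hx
    obtain ⟨t, _, hxt⟩ := Finset.mem_biUnion.1 hx
    exact hg1 t hxt
  have hS₀fin : S₀.Finite := F.finite_toSet
  have hspan : Submodule.span ℤ S ≤ Submodule.span ℤ S₀ := by
    rw [← hTspan, Submodule.span_le]
    intro t ht
    refine Submodule.span_mono ?_ (hg2 ⟨t, ht⟩)
    intro x hx
    exact Finset.mem_biUnion.2 ⟨⟨t, ht⟩, Finset.mem_attach _ _, hx⟩
  refine ⟨S₀, hS₀sub, hS₀fin, ?_⟩
  ext b
  -- the linear map whose kernel detects solutions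
  let φ : ((Fin n → ℤ) × A) →ₗ[ℤ] B :=
    (Fintype.linearCombination ℤ b).comp (LinearMap.fst ℤ _ _) -
      f.toIntLinearMap.comp (LinearMap.snd ℤ _ _)
  have hφ : ∀ ca : (Fin n → ℤ) × A, (∑ i, ca.1 i • b i = f ca.2) ↔ φ ca = 0 := by
    intro ca
    simp [φ, Fintype.linearCombination_apply, sub_eq_zero]
  have hker : ∀ (S' : Set ((Fin n → ℤ) × A)),
      (∀ ca ∈ S', ∑ i, ca.1 i • b i = f ca.2) ↔ S' ⊆ LinearMap.ker φ := by
    intro S'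
    constructor
    · intro h ca hca; exact LinearMap.mem_ker.2 ((hφ ca).1 (h ca hca))
    · intro h ca hca; exact (hφ ca).2 (LinearMap.mem_ker.1 (h hca))
  simp only [Set.mem_setOf_eq, hker]
  constructor
  · intro h
    have : Submodule.span ℤ S ≤ LinearMap.ker φ :=
      le_trans hspan (Submodule.span_le.2 h)
    exact le_trans Submodule.subset_span this
  · intro h
    exact le_trans (le_trans hS₀sub Submodule.subset_span)
      (Submodule.span_le.2 h)
end
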